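/- Let k1, k2, k3 > 0 and K = diag(k1,k2,k3), and set h1 = min{k1+k2, k1+k3, k2+k3}. Let x ∈ ℝ³ with x ≠ 0, θ = ‖x‖, u = x/θ, and G = I₃ + sin(θ)·û + (1 − cos(θ))·û². Then (1/2)·tr(K(I₃ − G)) ≥ (h1/2)·(1 − cos θ). -/
import Mathlib


open Matrix

noncomputable section

/-- Euclidean norm on ℝ³. -/
def euclNorm (x : Fin 3 → ℝ) : ℝ := Real.sqrt (∑ i, x i ^ 2)

/-- The hat map: sends `x ∈ ℝ³` to the skew-symmetric matrix `x̂`. -/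
def hat (x : Fin 3 → ℝ) : Matrix (Fin 3) (Fin 3) ℝ :=
  !![0, -x 2, x 1; x 2, 0, -x 0; -x 1, x 0, 0]

theorem stmt8 (k1 k2 k3 : ℝ)
    (hk1 : 0 < k1) (hk2 : 0 < k2) (hk3 : 0 < k3)
    (K : Matrix (Fin 3) (Fin 3) ℝ) (hK : K = Matrix.diagonal ![k1, k2, k3])
    (h1 : ℝ) (hh1 : h1 = min (k1 + k2) (min (k1 + k3) (k2 + k3)))
    (x : Fin 3 → ℝ) (hx : x ≠ 0)
    (θ : ℝ) (hθ : θ = euclNorm x)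
    (u : Fin 3 → ℝ) (hu : u = θ⁻¹ • x)
    (G : Matrix (Fin 3) (Fin 3) ℝ)
    (hG : G = 1 + Real.sin θ • hat u + (1 - Real.cos θ) • (hat u * hat u)) :
    (1 / 2) * (K * (1 - G)).trace ≥ (h1 / 2) * (1 - Real.cos θ) := by
  have hsum : 0 < ∑ i, x i ^ 2 := by
    rcases Function.ne_iff.mp hx with ⟨i, hi⟩
    have hle : x i ^ 2 ≤ ∑ j, x j ^ 2 :=
      Finset.single_le_sum (f := fun j => x j ^ 2) (fun j _ => sq_nonneg _) (Finset.mem_univ i)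
    have hne : x i ≠ 0 := by simpa using hi
    have : 0 < x i ^ 2 := by positivity
    linarith
  have hθpos : 0 < θ := by rw [hθ, euclNorm]; positivity
  have hθsq : θ ^ 2 = ∑ i, x i ^ 2 := by
    rw [hθ, euclNorm, Real.sq_sqrt hsum.le]
  have hunit : u 0 ^ 2 + u 1 ^ 2 + u 2 ^ 2 = 1 := by
    simp only [hu, Pi.smul_apply, smul_eq_mul]
    have h2 : x 0 ^ 2 + x 1 ^ 2 + x 2 ^ 2 = θ ^ 2 := by
      rw [hθsq, Fin.sum_univ_three]
    field_simp
    linarith [h2]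
  have hc : 1 - Real.cos θ ≥ 0 := by nlinarith [Real.cos_le_one θ]
  have htr : (K * (1 - G)).trace =
      (1 - Real.cos θ) * ((k2 + k3) * u 0 ^ 2 + (k1 + k3) * u 1 ^ 2 + (k1 + k2) * u 2 ^ 2) := by
    subst hK hG
    simp [Matrix.trace, Matrix.diag, Matrix.mul_apply, Fin.sum_univ_three, hat,
      Matrix.one_apply, Matrix.diagonal]
    ring_nf
  rw [htr, hh1]
  have hmin1 : min (k1 + k2) (min (k1 + k3) (k2 + k3)) ≤ k2 + k3 :=
    le_trans (min_le_right _ _) (min_le_right _ _)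
  have hmin2 : min (k1 + k2) (min (k1 + k3) (k2 + k3)) ≤ k1 + k3 :=
    le_trans (min_le_right _ _) (min_le_left _ _)
  have hmin3 : min (k1 + k2) (min (k1 + k3) (k2 + k3)) ≤ k1 + k2 := min_le_left _ _
  set m := min (k1 + k2) (min (k1 + k3) (k2 + k3)) with hm
  have key : m ≤ (k2 + k3) * u 0 ^ 2 + (k1 + k3) * u 1 ^ 2 + (k1 + k2) * u 2 ^ 2 := by
    nlinarith [mul_le_mul_of_nonneg_right hmin1 (sq_nonneg (u 0)),
      mul_le_mul_of_nonneg_right hmin2 (sq_nonneg (u 1)),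
      mul_le_mul_of_nonneg_right hmin3 (sq_nonneg (u 2))]
  have := mul_le_mul_of_nonneg_left key hc
  linarith
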